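/- Let d ≥ 3, α ∈ (0,d), q ∈ ((2d-α)/d, (2d-α+2)/d), and A, B, C > 0. Define f(a,ρ) = A - B·a^((2q-d(q-2)-α)/2)·ρ^((d(q-2)+α-2)/2) - C·ρ^((2d-α)/(d-2)-1). Then there exists a constant K > 0 (explicit in terms of d, q, α, B, C) such that max_{ρ>0} f(a,ρ) = A - K·a^((d+2-α)/d) for all a > 0. Consequently, setting a₀ = (A/K)^(d/(d+2-α)), one has max_{ρ>0} f(a,ρ) > 0 if a < a₀, = 0 if a = a₀, and < 0 if a > a₀. -/

import Mathlib

open Real Set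

/-- The function `f(a,ρ)` from Lemma 2.1 of the paper. -/
noncomputable def fFun (d : ℕ) (α q A B C a ρ : ℝ) : ℝ :=
  A - B * a ^ ((2 * q - d * (q - 2) - α) / 2) * ρ ^ ((d * (q - 2) + α - 2) / 2)
    - C * ρ ^ ((2 * d - α) / (d - 2) - 1)

/-- Minimization of `P ρ^t + C ρ^u` over `ρ > 0` for `t < 0 < u`, via weighted AM-GM. -/
lemma aux_min (P C t u : ℝ) (hP : 0 < P) (hC : 0 < C) (ht : t < 0) (hu : 0 < u) :
    IsLeast ((fun ρ => P * ρ ^ t + C * ρ ^ u) '' Ioi 0)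
      ((P / (u / (u - t))) ^ (u / (u - t)) * (C / (-t / (u - t))) ^ (-t / (u - t))) := by
  have hut : 0 < u - t := by linarith
  set w1 : ℝ := u / (u - t) with hw1def
  set w2 : ℝ := -t / (u - t) with hw2def
  have hw1 : 0 < w1 := by positivity
  have hw2 : 0 < w2 := div_pos (by linarith) hut
  have hw : w1 + w2 = 1 := by
    rw [hw1def, hw2def, ← add_div, show u + -t = u - t by ring]
    exact div_self hut.ne'
  have hzero : t * w1 + u * w2 = 0 := by
    rw [hw1def, hw2def]; field_simp; ring
  -- product formula
  have hprod : ∀ ρ : ℝ, 0 < ρ →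
      (P * ρ ^ t / w1) ^ w1 * (C * ρ ^ u / w2) ^ w2
        = (P / w1) ^ w1 * (C / w2) ^ w2 := by
    intro ρ hρ
    have h1 : P * ρ ^ t / w1 = (P / w1) * ρ ^ t := by ring
    have h2 : C * ρ ^ u / w2 = (C / w2) * ρ ^ u := by ring
    have hX : ρ ^ (t * w1) * ρ ^ (u * w2) = 1 := by
      rw [← Real.rpow_add hρ, hzero, Real.rpow_zero]
    rw [h1, h2, Real.mul_rpow (by positivity) (by positivity),
      Real.mul_rpow (by positivity) (by positivity),
      ← Real.rpow_mul hρ.le, ← Real.rpow_mul hρ.le, mul_mul_mul_comm, hX, mul_one]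
  constructor
  · -- membership: the equality case at ρ* = (P*w2/(C*w1))^(1/(u-t))
    set z : ℝ := P * w2 / (C * w1) with hzdef
    have hz : 0 < z := by positivity
    set ρ₀ : ℝ := z ^ (u - t)⁻¹ with hρ₀def
    have hρ₀ : 0 < ρ₀ := by positivity
    refine ⟨ρ₀, mem_Ioi.2 hρ₀, ?_⟩
    have hpow : ρ₀ ^ (u - t) = z := Real.rpow_inv_rpow hz.le hut.ne'
    have heq : C * ρ₀ ^ u / w2 = P * ρ₀ ^ t / w1 := by
      have hsplit : ρ₀ ^ u = ρ₀ ^ t * ρ₀ ^ (u - t) := by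
        rw [← Real.rpow_add hρ₀]; ring_nf
      rw [hsplit, hpow, hzdef]
      field_simp
    set x : ℝ := P * ρ₀ ^ t / w1 with hxdef
    have hx : 0 < x := by positivity
    have hval : P * ρ₀ ^ t + C * ρ₀ ^ u = x := by
      have h1 : P * ρ₀ ^ t = w1 * x := by rw [hxdef]; field_simp
      have h2 : C * ρ₀ ^ u = w2 * x := by
        rw [show w2 * x = w2 * (C * ρ₀ ^ u / w2) by rw [heq], mul_div_cancel₀ _ hw2.ne']
      rw [h1, h2, ← add_mul, hw, one_mul]
    have hxM : x = (P / w1) ^ w1 * (C / w2) ^ w2 := by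
      have : x = x ^ w1 * x ^ w2 := by
        rw [← Real.rpow_add hx, hw, Real.rpow_one]
      rw [this]
      nth_rewrite 2 [show x = C * ρ₀ ^ u / w2 by rw [heq]]
      rw [hxdef, hprod ρ₀ hρ₀]
    simp only [hval, hxM]
  · -- lower bound via weighted AM-GM
    rintro y ⟨ρ, hρ, rfl⟩
    have hρ' : (0:ℝ) < ρ := hρ
    have key := Real.geom_mean_le_arith_mean2_weighted hw1.le hw2.le
      (le_of_lt (show (0:ℝ) < P * ρ ^ t / w1 by positivity))
      (le_of_lt (show (0:ℝ) < C * ρ ^ u / w2 by positivity)) hw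
    rw [hprod ρ hρ'] at key
    calc (P / w1) ^ w1 * (C / w2) ^ w2
        ≤ w1 * (P * ρ ^ t / w1) + w2 * (C * ρ ^ u / w2) := key
      _ = P * ρ ^ t + C * ρ ^ u := by field_simp

theorem stmt1 (d : ℕ) (hd : 3 ≤ d) (α q A B C : ℝ)
    (hα : 0 < α) (hα' : α < d)
    (hq : (2 * d - α) / d < q) (hq' : q < (2 * d - α + 2) / d)
    (hA : 0 < A) (hB : 0 < B) (hC : 0 < C) :
    ∃ K > (0 : ℝ),
      (∀ a > (0 : ℝ),
        IsGreatest (fFun d α q A B C a '' Ioi (0 : ℝ))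
          (A - K * a ^ ((d + 2 - α) / d))) ∧
      (∀ a > (0 : ℝ),
        (a < (A / K) ^ ((d : ℝ) / (d + 2 - α)) → 0 < A - K * a ^ ((d + 2 - α) / d)) ∧
        (a = (A / K) ^ ((d : ℝ) / (d + 2 - α)) → A - K * a ^ ((d + 2 - α) / d) = 0) ∧
        ((A / K) ^ ((d : ℝ) / (d + 2 - α)) < a → A - K * a ^ ((d + 2 - α) / d) < 0)) := by
  have hd3 : (3:ℝ) ≤ (d:ℝ) := by exact_mod_cast hd
  have hd0 : (0:ℝ) < (d:ℝ) := by linarith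
  have hd2 : (0:ℝ) < (d:ℝ) - 2 := by linarith
  set s : ℝ := (2 * q - d * (q - 2) - α) / 2 with hsdef
  set t : ℝ := (d * (q - 2) + α - 2) / 2 with htdef
  set u : ℝ := (2 * d - α) / (d - 2) - 1 with hudef
  have hqd : (2 * d - α) < q * d := by
    rw [div_lt_iff₀ hd0] at hq; linarith
  have hqd' : q * d < 2 * d - α + 2 := by
    rw [lt_div_iff₀ hd0] at hq'; linarith
  have ht : t < 0 := by rw [htdef]; nlinarith
  have hu : 0 < u := by
    rw [hudef, sub_pos, lt_div_iff₀ hd2]; linarith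
  have hut : 0 < u - t := by linarith
  set e : ℝ := ((d:ℝ) + 2 - α) / d with hedef
  have he : 0 < e := div_pos (by linarith) hd0
  set w1 : ℝ := u / (u - t) with hw1def
  set w2 : ℝ := -t / (u - t) with hw2def
  have hw1 : 0 < w1 := by positivity
  have hw2 : 0 < w2 := div_pos (by linarith) hut
  -- key exponent identity : s * w1 = e
  have hkey : s * u = e * (u - t) := by
    rw [hsdef, hudef, htdef, hedef]
    field_simp
    ring
  have hsw1 : s * w1 = e := by
    rw [hw1def, ← mul_div_assoc, hkey, mul_div_assoc, div_self hut.ne', mul_one]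
  refine ⟨(B / w1) ^ w1 * (C / w2) ^ w2, by positivity, ?_, ?_⟩
  · intro a ha
    have hmin := aux_min (B * a ^ s) C t u (by positivity) hC ht hu
    rw [← hw1def, ← hw2def] at hmin
    have hM : (B * a ^ s / w1) ^ w1 * (C / w2) ^ w2
        = ((B / w1) ^ w1 * (C / w2) ^ w2) * a ^ e := by
      rw [show B * a ^ s / w1 = (B / w1) * a ^ s by ring,
        Real.mul_rpow (by positivity) (by positivity), ← Real.rpow_mul ha.le, hsw1]
      ring
    rw [hM] at hmin
    have hfun : ∀ ρ : ℝ, 0 < ρ →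
        fFun d α q A B C a ρ = A - ((B * a ^ s) * ρ ^ t + C * ρ ^ u) := by
      intro ρ hρ
      rw [fFun, hsdef, htdef, hudef]; ring
    constructor
    · obtain ⟨ρ₀, hρ₀, hval⟩ := hmin.1
      have hval' : B * a ^ s * ρ₀ ^ t + C * ρ₀ ^ u
          = (B / w1) ^ w1 * (C / w2) ^ w2 * a ^ e := hval
      exact ⟨ρ₀, hρ₀, by rw [hfun ρ₀ hρ₀, hval']⟩
    · rintro y ⟨ρ, hρ, rfl⟩
      have := hmin.2 ⟨ρ, hρ, rfl⟩
      rw [hfun ρ hρ]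
      linarith
  · intro a ha
    set K : ℝ := (B / w1) ^ w1 * (C / w2) ^ w2 with hKdef
    have hK : 0 < K := by positivity
    have hAK : 0 < A / K := by positivity
    have hde : (d:ℝ) / ((d:ℝ) + 2 - α) = e⁻¹ := by
      rw [hedef, inv_div]
    have ha0e : ((A / K) ^ ((d:ℝ) / ((d:ℝ) + 2 - α))) ^ e = A / K := by
      rw [hde]; exact Real.rpow_inv_rpow hAK.le he.ne'
    refine ⟨?_, ?_, ?_⟩
    · intro h
      have := Real.rpow_lt_rpow ha.le h he
      rw [ha0e] at this
      have : K * a ^ e < A := by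
        rw [lt_div_iff₀ hK] at this; linarith [this]
      linarith
    · intro h
      rw [h, ha0e, mul_div_cancel₀ _ hK.ne', sub_self]
    · intro h
      have hx : 0 ≤ (A / K) ^ ((d:ℝ) / ((d:ℝ) + 2 - α)) := by positivity
      have := Real.rpow_lt_rpow hx h he
      rw [ha0e] at this
      have : A < K * a ^ e := by
        rw [div_lt_iff₀ hK] at this; linarith [this]
      linarith
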